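/- The Poisson log-likelihood l is twice differentiable, and for every α ∈ ℝ^M and every v ∈ ℝ^M the second derivative of l at α applied to (v, v) equals −Σ_{i=1}^N d_i · exp(−(Lα)_i) · ((Lv)_i)². In particular this quantity is ≤ 0 for all v. -/

import Mathlib

/-- The Poisson log-likelihood for the Raman lidar inverse problem. -/
noncomputable def lidarLogLik {N M : ℕ} (L : Matrix (Fin N) (Fin M) ℝ)
    (d : Fin N → ℝ) (P : Fin N → ℕ) (α : Fin M → ℝ) : ℝ :=
  ∑ i, ((P i : ℝ) * Real.log (d i) - (L.mulVec α i) * (P i : ℝ)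
    - d i * Real.exp (-(L.mulVec α i)) - Real.log (Nat.factorial (P i)))

noncomputable def phiCLM {N M : ℕ} (L : Matrix (Fin N) (Fin M) ℝ) (i : Fin N) :
    (Fin M → ℝ) →L[ℝ] ℝ :=
  (ContinuousLinearMap.proj i).comp (LinearMap.toContinuousLinearMap (Matrix.mulVecLin L))

lemma phiCLM_apply {N M : ℕ} (L : Matrix (Fin N) (Fin M) ℝ) (i : Fin N) (α : Fin M → ℝ) :
    phiCLM L i α = L.mulVec α i := rfl

noncomputable def lidarD1 {N M : ℕ} (L : Matrix (Fin N) (Fin M) ℝ)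
    (d : Fin N → ℝ) (P : Fin N → ℕ) (α : Fin M → ℝ) : (Fin M → ℝ) →L[ℝ] ℝ :=
  ∑ i, (d i * Real.exp (-(L.mulVec α i)) - (P i : ℝ)) • phiCLM L i

lemma lidar_hasFDerivAt {N M : ℕ} (L : Matrix (Fin N) (Fin M) ℝ)
    (d : Fin N → ℝ) (P : Fin N → ℕ) (α : Fin M → ℝ) :
    HasFDerivAt (lidarLogLik L d P) (lidarD1 L d P α) α := by
  unfold lidarLogLik lidarD1
  apply HasFDerivAt.fun_sum
  intro i _
  have hφ : HasFDerivAt (fun α : Fin M → ℝ => L.mulVec α i) (phiCLM L i) α :=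
    (phiCLM L i).hasFDerivAt
  have h1 : HasFDerivAt (fun α : Fin M → ℝ => L.mulVec α i * (P i : ℝ))
      ((P i : ℝ) • phiCLM L i) α := hφ.mul_const _
  have h2 : HasFDerivAt (fun α : Fin M → ℝ => d i * Real.exp (-(L.mulVec α i)))
      (d i • (Real.exp (-(L.mulVec α i)) • -phiCLM L i)) α :=
    (hφ.neg.exp).const_mul _
  have := (((hasFDerivAt_const ((P i : ℝ) * Real.log (d i)) α).fun_sub h1).fun_sub h2).fun_sub
    (hasFDerivAt_const (Real.log (Nat.factorial (P i))) α)
  convert this using 1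
  ext v
  simp [smul_smul]
  ring

noncomputable def lidarD2 {N M : ℕ} (L : Matrix (Fin N) (Fin M) ℝ)
    (d : Fin N → ℝ) (α : Fin M → ℝ) : (Fin M → ℝ) →L[ℝ] ((Fin M → ℝ) →L[ℝ] ℝ) :=
  ∑ i, ((-(d i * Real.exp (-(L.mulVec α i)))) • phiCLM L i).smulRight (phiCLM L i)

lemma lidarD1_hasFDerivAt {N M : ℕ} (L : Matrix (Fin N) (Fin M) ℝ)
    (d : Fin N → ℝ) (P : Fin N → ℕ) (α : Fin M → ℝ) :
    HasFDerivAt (lidarD1 L d P) (lidarD2 L d α) α := by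
  unfold lidarD1 lidarD2
  apply HasFDerivAt.fun_sum
  intro i _
  have hφ : HasFDerivAt (fun α : Fin M → ℝ => L.mulVec α i) (phiCLM L i) α :=
    (phiCLM L i).hasFDerivAt
  have hc : HasFDerivAt (fun α : Fin M → ℝ => d i * Real.exp (-(L.mulVec α i)) - (P i : ℝ))
      ((-(d i * Real.exp (-(L.mulVec α i)))) • phiCLM L i) α := by
    have := ((hφ.fun_neg.exp).const_mul (d i)).sub_const ((P i : ℝ))
    refine this.congr_fderiv ?_
    ext v
    simp [smul_smul]
  exact hc.smul_const (phiCLM L i)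

/-- The Poisson log-likelihood is twice differentiable and its second derivative at `α`
applied to `(v, v)` equals `−Σ_i d_i exp(−(Lα)_i) ((Lv)_i)²`, which is `≤ 0`. -/
theorem stmt_1 {N M : ℕ} (hN : 0 < N) (hM : 0 < M)
    (L : Matrix (Fin N) (Fin M) ℝ) (d : Fin N → ℝ) (hd : ∀ i, 0 < d i)
    (P : Fin N → ℕ) :
    ContDiff ℝ 2 (lidarLogLik L d P) ∧
    ∀ (α v : Fin M → ℝ),
      iteratedFDeriv ℝ 2 (lidarLogLik L d P) α ![v, v] =
        -∑ i, d i * Real.exp (-(L.mulVec α i)) * (L.mulVec v i) ^ 2 ∧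
      iteratedFDeriv ℝ 2 (lidarLogLik L d P) α ![v, v] ≤ 0 := by
  have hφc : ∀ i : Fin N, ContDiff ℝ 2 (fun α : Fin M → ℝ => L.mulVec α i) :=
    fun i => (phiCLM L i).contDiff
  have hsmooth : ContDiff ℝ 2 (lidarLogLik L d P) := by
    unfold lidarLogLik
    apply ContDiff.sum
    intro i _
    exact ((contDiff_const.sub ((hφc i).mul contDiff_const)).sub
      (contDiff_const.mul (Real.contDiff_exp.comp (hφc i).neg))).sub contDiff_const
  refine ⟨hsmooth, fun α v => ?_⟩
  have hfd : fderiv ℝ (lidarLogLik L d P) = lidarD1 L d P :=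
    funext fun x => (lidar_hasFDerivAt L d P x).fderiv
  have key : iteratedFDeriv ℝ 2 (lidarLogLik L d P) α ![v, v] =
      -∑ i, d i * Real.exp (-(L.mulVec α i)) * (L.mulVec v i) ^ 2 := by
    rw [iteratedFDeriv_two_apply, hfd, (lidarD1_hasFDerivAt L d P α).fderiv]
    show (lidarD2 L d α (![v, v] 0)) (![v, v] 1) = _
    simp only [Matrix.cons_val_zero, Matrix.cons_val_one, Matrix.head_cons]
    unfold lidarD2
    rw [ContinuousLinearMap.sum_apply]
    rw [ContinuousLinearMap.sum_apply]
    rw [← Finset.sum_neg_distrib]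
    apply Finset.sum_congr rfl
    intro i _
    simp [phiCLM_apply]
    ring
  refine ⟨key, ?_⟩
  rw [key]
  simp only [neg_nonpos]
  apply Finset.sum_nonneg
  intro i _
  have := (hd i).le
  positivity
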